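/- arXiv:1301.5875 — 5 statements merged into one kernel-verified Lean document; each statement's English description precedes it below -/
import Mathlib

section
/- For every integer n ≥ 2 and every ε₀ with 0 < ε₀ < 1, the iterates ε_{m+1} = T_n(ε_m) with T_n(ε) = (ε/2^(n-1))·(2^(n-1) + 1 − ε) form a strictly increasing sequence converging to 1. -/
theorem bs_iterates_increase_to_one (n : ℕ) (hn : 2 ≤ n) (ε₀ : ℝ) (h0 : 0 < ε₀) (h1 : ε₀ < 1) :
    StrictMono (fun m : ℕ =>
      (fun ε : ℝ => ε / 2 ^ (n - 1) * (2 ^ (n - 1) + 1 - ε))^[m] ε₀) ∧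
    Filter.Tendsto (fun m : ℕ =>
      (fun ε : ℝ => ε / 2 ^ (n - 1) * (2 ^ (n - 1) + 1 - ε))^[m] ε₀)
      Filter.atTop (nhds 1) := by
  set c : ℝ := 2 ^ (n - 1) with hc
  have hc2 : (2:ℝ) ≤ c := by
    rw [hc]
    calc (2:ℝ) = 2 ^ 1 := by norm_num
    _ ≤ 2 ^ (n - 1) := by
        apply pow_le_pow_right₀ (by norm_num)
        omega
  have hcpos : (0:ℝ) < c := by linarith
  set T : ℝ → ℝ := fun ε => ε / c * (c + 1 - ε) with hT
  set x : ℕ → ℝ := fun m => T^[m] ε₀ with hx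
  have hxs : ∀ m, x (m + 1) = T (x m) := fun m => Function.iterate_succ_apply' T m ε₀
  have hgap : ∀ ε : ℝ, T ε - ε = ε * (1 - ε) / c := by
    intro ε; rw [hT]; field_simp; ring
  have hone : ∀ ε : ℝ, 1 - T ε = (1 - ε) * (c - ε) / c := by
    intro ε; rw [hT]; field_simp; ring
  have hbound : ∀ m, 0 < x m ∧ x m < 1 := by
    intro m
    induction m with
    | zero => exact ⟨h0, h1⟩
    | succ k ih =>
      obtain ⟨hp, hl⟩ := ih
      rw [hxs]
      constructor
      · rw [hT]
        apply mul_pos (div_pos hp hcpos)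
        nlinarith
      · have h := hone (x k)
        have : (0:ℝ) < (1 - x k) * (c - x k) / c :=
          div_pos (mul_pos (by linarith) (by linarith)) hcpos
        linarith
  have hmono : StrictMono x := by
    apply strictMono_nat_of_lt_succ
    intro m
    obtain ⟨hp, hl⟩ := hbound m
    have h := hgap (x m)
    have : (0:ℝ) < x m * (1 - x m) / c :=
      div_pos (mul_pos hp (by linarith)) hcpos
    rw [hxs]; linarith
  refine ⟨hmono, ?_⟩
  have hbdd : BddAbove (Set.range x) := by
    refine ⟨1, ?_⟩
    rintro _ ⟨m, rfl⟩
    exact (hbound m).2.le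
  set L : ℝ := ⨆ m, x m with hL
  have htend : Filter.Tendsto x Filter.atTop (nhds L) :=
    tendsto_atTop_ciSup hmono.monotone hbdd
  have hTcont : Continuous T := by
    rw [hT]; continuity
  have htend2 : Filter.Tendsto (fun m => x (m + 1)) Filter.atTop (nhds L) :=
    htend.comp (Filter.tendsto_add_atTop_nat 1)
  have htend3 : Filter.Tendsto (fun m => T (x m)) Filter.atTop (nhds (T L)) :=
    (hTcont.tendsto L).comp htend
  have hfix : T L = L := by
    apply tendsto_nhds_unique _ htend2
    simpa only [hxs] using htend3
  have hLlb : ε₀ ≤ L := le_ciSup hbdd 0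
  have hLub : L ≤ 1 := ciSup_le fun m => (hbound m).2.le
  have h := hgap L
  have hzero : L * (1 - L) = 0 := by
    have : L * (1 - L) / c = 0 := by linarith
    field_simp at this
    rw [mul_zero] at this
    exact this
  have hL1 : L = 1 := by
    rcases mul_eq_zero.mp hzero with h' | h'
    · linarith
    · linarith
  rw [← hL1]
  exact htend
end

section
/- The sequence ε_m defined by ε_0 = ε ∈ (0,1) and ε_{m+1} = (ε_m/2^(n-1))·(2^(n-1) + 1 − ε_m) is monotone increasing and bounded above by 1. -/
theorem bs_iterates_monotone_bounded (n : ℕ) (hn : 2 ≤ n) (ε : ℝ) (h0 : 0 < ε) (h1 : ε < 1)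
    (e : ℕ → ℝ) (he0 : e 0 = ε)
    (hrec : ∀ m, e (m + 1) = e m / 2 ^ (n - 1) * (2 ^ (n - 1) + 1 - e m)) :
    Monotone e ∧ ∀ m, e m ≤ 1 := by
  set c : ℝ := 2 ^ (n - 1) with hc
  have hc2 : (2 : ℝ) ≤ c := by
    calc (2:ℝ) = 2 ^ 1 := (pow_one 2).symm
    _ ≤ c := by
      apply pow_le_pow_right₀ (by norm_num)
      omega
  have hcpos : (0 : ℝ) < c := by linarith
  have key : ∀ m, 0 < e m ∧ e m < 1 := by
    intro m
    induction m with
    | zero => exact ⟨by rw [he0]; exact h0, by rw [he0]; exact h1⟩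
    | succ k ih =>
      obtain ⟨hp, hl⟩ := ih
      rw [hrec k]
      constructor
      · have : 0 < e k / c := div_pos hp hcpos
        nlinarith
      · rw [div_mul_eq_mul_div, div_lt_one hcpos]
        nlinarith
  have step : ∀ m, e m ≤ e (m + 1) := by
    intro m
    obtain ⟨hp, hl⟩ := key m
    rw [hrec m, div_mul_eq_mul_div, le_div_iff₀ hcpos]
    nlinarith
  exact ⟨monotone_nat_of_le_succ step, fun m => (key m).2.le⟩
end

section
/- Let n ≥ 2. Applying the generalized BS wiring (inputs y_i = x_i·(1−a_i) to the second box and outputs c_i = a_i ⊕ b_i) to two independent copies with state components P^PR·P^PR, P^PR·P^c, P^c·P^PR, and P^c·P^c yields, respectively, the boxes P^PR, P^PR, 2^{1−n}·P^PR + (1−2^{1−n})·P^c, and P^c. -/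
/-- The n-partite PR box: uniform over outputs with XOR of outputs = AND of inputs. -/
noncomputable def PRbox (n : ℕ) (a x : Fin n → ZMod 2) : ℝ :=
  if (∑ i, a i) = (∏ i, x i) then (2:ℝ) ^ (-((n:ℤ) - 1)) else 0

/-- The even-parity box: uniform over outputs with XOR of outputs = 0. -/
noncomputable def Cbox (n : ℕ) (a x : Fin n → ZMod 2) : ℝ :=
  if (∑ i, a i) = 0 then (2:ℝ) ^ (-((n:ℤ) - 1)) else 0

/-- The generalized BS wiring: party i inputs x_i to the first box P (getting a_i),
inputs y_i = x_i·(1 - a_i) to the second box Q (getting b_i), and outputs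
c_i = a_i ⊕ b_i.  (Over ZMod 2, 1 - a_i = 1 + a_i and b_i = c_i + a_i.) -/
noncomputable def wire (n : ℕ) (P Q : (Fin n → ZMod 2) → (Fin n → ZMod 2) → ℝ)
    (c x : Fin n → ZMod 2) : ℝ :=
  ∑ a : Fin n → ZMod 2, P a x * Q (fun i => c i + a i) (fun i => x i * (1 + a i))

lemma zmod2 (z : ZMod 2) : z = 0 ∨ z = 1 := by revert z; decide

lemma zflip (z : ZMod 2) : z + 1 + 1 = z := by revert z; decide

lemma flip_sum (n : ℕ) (hn : 0 < n) (a : Fin n → ZMod 2) :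
    ∑ i, Function.update a ⟨0, hn⟩ (a ⟨0, hn⟩ + 1) i = (∑ i, a i) + 1 := by
  rw [Finset.sum_update_of_mem (Finset.mem_univ _), ← Finset.erase_eq,
    ← Finset.add_sum_erase Finset.univ a (Finset.mem_univ (⟨0, hn⟩ : Fin n))]
  ring

lemma flip_inv (n : ℕ) (hn : 0 < n) (a : Fin n → ZMod 2) :
    Function.update (Function.update a ⟨0, hn⟩ (a ⟨0, hn⟩ + 1)) ⟨0, hn⟩
      (Function.update a ⟨0, hn⟩ (a ⟨0, hn⟩ + 1) ⟨0, hn⟩ + 1) = a := by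
  rw [Function.update_self, Function.update_idem, zflip, Function.update_eq_self]

lemma card_fiber (n : ℕ) (hn : 0 < n) (s : ZMod 2) :
    (Finset.univ.filter (fun a : Fin n → ZMod 2 => ∑ i, a i = s)).card = 2 ^ (n - 1) := by
  have mem : ∀ (u v : ZMod 2), u + 1 = v →
      ∀ a ∈ Finset.univ.filter (fun a : Fin n → ZMod 2 => ∑ i, a i = u),
      Function.update a ⟨0, hn⟩ (a ⟨0, hn⟩ + 1)
        ∈ Finset.univ.filter (fun a : Fin n → ZMod 2 => ∑ i, a i = v) := by
    intro u v huv a ha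
    simp only [Finset.mem_filter, Finset.mem_univ, true_and] at ha ⊢
    rw [flip_sum n hn, ha, huv]
  have key : (Finset.univ.filter (fun a : Fin n → ZMod 2 => ∑ i, a i = 0)).card
      = (Finset.univ.filter (fun a : Fin n → ZMod 2 => ∑ i, a i = 1)).card := by
    exact Finset.card_bij' (fun a _ => Function.update a ⟨0, hn⟩ (a ⟨0, hn⟩ + 1))
      (fun a _ => Function.update a ⟨0, hn⟩ (a ⟨0, hn⟩ + 1))
      (mem 0 1 rfl) (mem 1 0 rfl) (fun a _ => flip_inv n hn a) (fun a _ => flip_inv n hn a)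
  have total : (Finset.univ.filter (fun a : Fin n → ZMod 2 => ∑ i, a i = 0)).card
      + (Finset.univ.filter (fun a : Fin n → ZMod 2 => ∑ i, a i = 1)).card = 2 ^ n := by
    have hneg : Finset.univ.filter (fun a : Fin n → ZMod 2 => ¬ (∑ i, a i = 0))
        = Finset.univ.filter (fun a : Fin n → ZMod 2 => ∑ i, a i = 1) := by
      apply Finset.filter_congr
      intro a _
      rcases zmod2 (∑ i, a i) with h | h <;> simp [h]
    rw [← hneg, Finset.card_filter_add_card_filter_not]
    simp [Fintype.card_fun]
  have h2 : 2 ^ n = 2 * 2 ^ (n - 1) := by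
    cases n with
    | zero => omega
    | succ m =>
      rw [pow_succ]
      norm_num
      ring
  set c0 := (Finset.univ.filter (fun a : Fin n → ZMod 2 => ∑ i, a i = 0)).card with hc0
  set c1 := (Finset.univ.filter (fun a : Fin n → ZMod 2 => ∑ i, a i = 1)).card with hc1
  clear mem
  clear_value c0 c1
  have hfin : c0 = 2 ^ (n - 1) ∧ c1 = 2 ^ (n - 1) := by
    clear hc0 hc1
    omega
  rcases zmod2 s with rfl | rfl
  · rw [← hc0]; exact hfin.1
  · rw [← hc1]; exact hfin.2

lemma card_zero (n : ℕ) :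
    (Finset.univ.filter (fun a : Fin n → ZMod 2 => a = 0)).card = 1 := by
  have h : Finset.univ.filter (fun a : Fin n → ZMod 2 => a = 0) = {0} := by
    ext a
    simp [Finset.mem_filter]
  rw [h, Finset.card_singleton]

lemma card_fiber_ne (n : ℕ) (hn : 0 < n) :
    (Finset.univ.filter (fun a : Fin n → ZMod 2 => ∑ i, a i = 0 ∧ ¬ a = 0)).card
      = 2 ^ (n - 1) - 1 := by
  have h1 : (Finset.univ.filter (fun a : Fin n → ZMod 2 => ∑ i, a i = 0 ∧ a = 0)).card = 1 := by
    have h : Finset.univ.filter (fun a : Fin n → ZMod 2 => ∑ i, a i = 0 ∧ a = 0) = {0} := by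
      ext a
      simp only [Finset.mem_filter, Finset.mem_univ, true_and, Finset.mem_singleton]
      constructor
      · rintro ⟨-, h⟩; exact h
      · rintro rfl; simp
    rw [h, Finset.card_singleton]
  have hsplit := Finset.card_filter_add_card_filter_not
    (s := Finset.univ.filter (fun a : Fin n → ZMod 2 => ∑ i, a i = 0))
    (p := fun a => a = 0)
  rw [Finset.filter_filter, Finset.filter_filter, card_fiber n hn 0] at hsplit
  set c0 := (Finset.univ.filter (fun a : Fin n → ZMod 2 => ∑ i, a i = 0 ∧ a = 0)).card with hc0
  set c1 := (Finset.univ.filter (fun a : Fin n → ZMod 2 => ∑ i, a i = 0 ∧ ¬ a = 0)).card with hc1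
  clear_value c0 c1
  clear hc0 hc1
  omega

lemma sum_ite_mul_ite {α : Type*} [Fintype α] (A B : α → Prop)
    [DecidablePred A] [DecidablePred B] (p q : ℝ) :
    (∑ a, (if A a then p else 0) * (if B a then q else 0))
      = (Finset.univ.filter (fun a => A a ∧ B a)).card * (p * q) := by
  have h : ∀ a, (if A a then p else 0) * (if B a then q else 0)
      = if A a ∧ B a then p * q else 0 := by
    intro a; by_cases h1 : A a <;> by_cases h2 : B a <;> simp [h1, h2]
  simp_rw [h]
  rw [← Finset.sum_filter, Finset.sum_const, nsmul_eq_mul]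

lemma prod_one_add (n : ℕ) (a : Fin n → ZMod 2) :
    ∏ i, (1 + a i) = if a = 0 then 1 else 0 := by
  by_cases h : a = 0
  · simp [h]
  · rw [if_neg h]
    obtain ⟨i, hi⟩ : ∃ i, a i ≠ 0 := by
      by_contra hc; push_neg at hc; exact h (funext fun i => hc i)
    apply Finset.prod_eq_zero (Finset.mem_univ i)
    rcases zmod2 (a i) with h0 | h1
    · exact absurd h0 hi
    · rw [h1]; decide

lemma card_cast (n : ℕ) (hn : 0 < n) :
    ((2 ^ (n - 1) : ℕ) : ℝ) = (2:ℝ) ^ ((n:ℤ) - 1) := by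
  push_cast
  rw [← zpow_natCast]
  congr 1
  omega

lemma hpp (n : ℕ) : (2:ℝ) ^ ((n:ℤ) - 1) * (2:ℝ) ^ ((1:ℤ) - n) = 1 := by
  rw [← zpow_add₀ (two_ne_zero)]
  have h : (n:ℤ) - 1 + ((1:ℤ) - n) = 0 := by ring
  rw [h, zpow_zero]

theorem bs_wiring_one_copy_rules (n : ℕ) (hn : 2 ≤ n) :
    (∀ c x, wire n (PRbox n) (PRbox n) c x = PRbox n c x) ∧
    (∀ c x, wire n (PRbox n) (Cbox n) c x = PRbox n c x) ∧
    (∀ c x, wire n (Cbox n) (PRbox n) c x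
        = (2:ℝ) ^ ((1:ℤ) - n) * PRbox n c x + (1 - (2:ℝ) ^ ((1:ℤ) - n)) * Cbox n c x) ∧
    (∀ c x, wire n (Cbox n) (Cbox n) c x = Cbox n c x) := by
  have hn0 : 0 < n := by omega
  have hneg : -((n:ℤ) - 1) = (1:ℤ) - n := by ring
  have hB : ∀ (c x a : Fin n → ZMod 2),
      ((∑ i, (c i + a i)) = ∏ i, (x i * (1 + a i)))
        ↔ ((∑ i, c i) + ∑ i, a i = (∏ i, x i) * (if a = 0 then 1 else 0)) := by
    intro c x a
    rw [Finset.sum_add_distrib, Finset.prod_mul_distrib, prod_one_add]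
  refine ⟨?_, ?_, ?_, ?_⟩
  · -- PR ∘ PR
    intro c x
    simp only [wire, PRbox, hneg]
    rw [sum_ite_mul_ite]
    rcases zmod2 (∏ i, x i) with ht | ht <;> rcases zmod2 (∑ i, c i) with hu | hu
    · rw [Finset.filter_congr (q := fun a : Fin n → ZMod 2 => ∑ i, a i = 0)
        (fun a _ => by rw [hB c x a, ht, hu]; simp)]
      rw [card_fiber n hn0 0, ht, hu, if_pos rfl, card_cast n hn0]
      linear_combination (2:ℝ) ^ ((1:ℤ) - n) * hpp n
    · rw [Finset.filter_congr (q := fun a : Fin n → ZMod 2 => False)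
        (fun a _ => by
          rw [hB c x a, ht, hu]
          simp only [zero_mul, iff_false, not_and]
          intro h1 h2
          rw [h1] at h2
          exact absurd h2 (by decide))]
      rw [Finset.filter_false, Finset.card_empty, ht, hu, if_neg (by decide)]
      norm_num
    · rw [Finset.filter_congr (q := fun a : Fin n → ZMod 2 => False)
        (fun a _ => by
          rw [hB c x a, ht, hu]
          simp only [iff_false, not_and]
          intro h1 h2
          have ha : ¬ a = 0 := fun h => by rw [h] at h1; simp at h1
          rw [if_neg ha, h1] at h2
          exact absurd h2 (by decide))]
      rw [Finset.filter_false, Finset.card_empty, ht, hu, if_neg (by decide)]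
      norm_num
    · rw [Finset.filter_congr (q := fun a : Fin n → ZMod 2 => ∑ i, a i = 1)
        (fun a _ => by
          rw [hB c x a, ht, hu]
          constructor
          · rintro ⟨h1, -⟩; exact h1
          · intro h1
            have ha : ¬ a = 0 := fun h => by rw [h] at h1; simp at h1
            rw [if_neg ha, h1]
            exact ⟨rfl, by decide⟩)]
      rw [card_fiber n hn0 1, ht, hu, if_pos rfl, card_cast n hn0]
      linear_combination (2:ℝ) ^ ((1:ℤ) - n) * hpp n
  · -- PR ∘ C
    intro c x
    simp only [wire, PRbox, Cbox, hneg]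
    rw [sum_ite_mul_ite]
    have hBC : ∀ a : Fin n → ZMod 2,
        ((∑ i, (c i + a i)) = 0) ↔ ((∑ i, c i) + ∑ i, a i = 0) := by
      intro a; rw [Finset.sum_add_distrib]
    by_cases h : (∑ i, c i) = ∏ i, x i
    · rw [Finset.filter_congr (q := fun a : Fin n → ZMod 2 => ∑ i, a i = ∏ i, x i)
        (fun a _ => by
          rw [hBC a]
          constructor
          · rintro ⟨h1, -⟩; exact h1
          · intro h1
            refine ⟨h1, ?_⟩
            rw [h1, ← h]
            rcases zmod2 (∑ i, c i) with h2 | h2 <;> rw [h2] <;> decide)]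
      rw [card_fiber n hn0 _, if_pos h, card_cast n hn0]
      linear_combination (2:ℝ) ^ ((1:ℤ) - n) * hpp n
    · rw [Finset.filter_congr (q := fun a : Fin n → ZMod 2 => False)
        (fun a _ => by
          rw [hBC a]
          simp only [iff_false, not_and]
          intro h1 h2
          rw [h1] at h2
          apply h
          rcases zmod2 (∑ i, c i) with h3 | h3 <;> rcases zmod2 (∏ i, x i) with h4 | h4 <;>
            rw [h3, h4] <;> rw [h3, h4] at h2 <;> first | rfl | exact absurd h2 (by decide))]
      rw [Finset.filter_false, Finset.card_empty, if_neg h]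
      norm_num
  · -- C ∘ PR
    intro c x
    simp only [wire, PRbox, Cbox, hneg]
    rw [sum_ite_mul_ite]
    rcases zmod2 (∏ i, x i) with ht | ht <;> rcases zmod2 (∑ i, c i) with hu | hu
    · rw [Finset.filter_congr (q := fun a : Fin n → ZMod 2 => ∑ i, a i = 0)
        (fun a _ => by rw [hB c x a, ht, hu]; simp)]
      rw [card_fiber n hn0 0, ht, hu, card_cast n hn0]
      simp only [reduceIte]
      linear_combination (2:ℝ) ^ ((1:ℤ) - n) * hpp n
    · rw [Finset.filter_congr (q := fun a : Fin n → ZMod 2 => False)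
        (fun a _ => by
          rw [hB c x a, ht, hu]
          simp only [zero_mul, iff_false, not_and]
          intro h1 h2
          rw [h1] at h2
          exact absurd h2 (by decide))]
      rw [Finset.filter_false, Finset.card_empty, ht, hu]
      norm_num
    · -- ∏x = 1, ∑c = 0 : card = 2^(n-1) - 1
      rw [Finset.filter_congr (q := fun a : Fin n → ZMod 2 => ∑ i, a i = 0 ∧ ¬ a = 0)
        (fun a _ => by
          rw [hB c x a, ht, hu]
          constructor
          · rintro ⟨h1, h2⟩
            refine ⟨h1, fun h0 => ?_⟩
            rw [if_pos h0, h1] at h2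
            exact absurd h2.symm (by decide)
          · rintro ⟨h1, h2⟩
            refine ⟨h1, ?_⟩
            rw [if_neg h2, h1]
            decide)]
      rw [card_fiber_ne n hn0, ht, hu]
      have hge : 1 ≤ 2 ^ (n - 1) := Nat.one_le_two_pow
      rw [Nat.cast_sub hge, card_cast n hn0]
      simp only [reduceIte]
      rw [if_neg (show ¬((0:ZMod 2) = 1) by decide)]
      push_cast
      linear_combination (2:ℝ) ^ ((1:ℤ) - n) * hpp n
    · -- ∏x = 1, ∑c = 1 : card = 1 (only a = 0)
      rw [Finset.filter_congr (q := fun a : Fin n → ZMod 2 => a = 0)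
        (fun a _ => by
          rw [hB c x a, ht, hu]
          constructor
          · rintro ⟨h1, h2⟩
            by_contra h0
            rw [if_neg h0, h1] at h2
            exact absurd h2 (by decide)
          · rintro rfl
            refine ⟨by simp, ?_⟩
            simp)]
      rw [card_zero n, ht, hu]
      simp only [reduceIte, if_true]
      rw [if_neg (show ¬((1:ZMod 2) = 0) by decide)]
      push_cast
      ring
  · -- C ∘ C
    intro c x
    simp only [wire, Cbox]
    rw [sum_ite_mul_ite]
    have hBC : ∀ a : Fin n → ZMod 2,
        ((∑ i, (c i + a i)) = 0) ↔ ((∑ i, c i) + ∑ i, a i = 0) := by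
      intro a; rw [Finset.sum_add_distrib]
    rcases zmod2 (∑ i, c i) with hu | hu
    · rw [Finset.filter_congr (q := fun a : Fin n → ZMod 2 => ∑ i, a i = 0)
        (fun a _ => by rw [hBC a, hu]; simp)]
      rw [card_fiber n hn0 0, hu, if_pos rfl, card_cast n hn0, hneg]
      linear_combination (2:ℝ) ^ ((1:ℤ) - n) * hpp n
    · rw [Finset.filter_congr (q := fun a : Fin n → ZMod 2 => False)
        (fun a _ => by
          rw [hBC a, hu]
          simp only [iff_false, not_and]
          intro h1 h2
          rw [h1] at h2
          exact absurd h2 (by decide))]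
      rw [Finset.filter_false, Finset.card_empty, hu, if_neg (by decide)]
      norm_num
end

section
/- Let P₁ be a full-correlation box on parties 1,...,k₂ with output parity g₁(x₁,...,x_{k₂}) and P₂ a full-correlation box on parties k₁,...,n with output parity ∏_{i=k₁}^{k₃} x_i, where 0 < k₁ < k₂ < k₃ ≤ n, run independently in parallel. If party i outputs c_i = a_i for i < k₁, c_i = a_i ⊕ b_i for k₁ ≤ i ≤ k₂, and c_i = b_i for i > k₂, then the resulting joint conditional distribution equals the n-partite full-correlation box with output parity g₁(x₁,...,x_{k₂}) ⊕ ∏_{i=k₁}^{k₃} x_i. -/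
open Finset

lemma ite_mul_ite_eq {P Q : Prop} [Decidable P] [Decidable Q] (c₁ c₂ : ℝ) :
    (if P then c₁ else 0) * (if Q then c₂ else 0) = if P ∧ Q then c₁ * c₂ else 0 := by
  split_ifs <;> simp_all

lemma zmod2_add11 : ∀ u : ZMod 2, u + 1 + 1 = u := by decide

lemma card_parity_fiber (α : Type*) [Fintype α] [DecidableEq α] [Nonempty α]
    (t : ZMod 2) :
    (univ.filter fun f : α → ZMod 2 => ∑ i, f i = t).card = 2 ^ (Fintype.card α - 1) := by
  classical
  obtain ⟨i₀⟩ := ‹Nonempty α›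
  have hflip : ∀ (f : α → ZMod 2) (t' : ZMod 2), (∑ i, f i = t') →
      ∑ i, Function.update f i₀ (f i₀ + 1) i = t' + 1 := by
    intro f t' h
    rw [Finset.sum_update_of_mem (mem_univ i₀)]
    rw [Finset.sum_eq_sum_sdiff_singleton_add (mem_univ i₀) f] at h
    rw [← h]; ring
  have hinv : ∀ f : α → ZMod 2,
      Function.update (Function.update f i₀ (f i₀ + 1)) i₀
        (Function.update f i₀ (f i₀ + 1) i₀ + 1) = f := by
    intro f
    ext j
    rcases eq_or_ne j i₀ with rfl | hj
    · simp [Function.update_self, zmod2_add11]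
    · simp [Function.update_of_ne hj]
  have hcard_eq : ∀ t' : ZMod 2, (univ.filter fun f : α → ZMod 2 => ∑ i, f i = t').card
      = (univ.filter fun f : α → ZMod 2 => ∑ i, f i = t' + 1).card := by
    intro t'
    refine Finset.card_bij' (fun f _ => Function.update f i₀ (f i₀ + 1))
      (fun f _ => Function.update f i₀ (f i₀ + 1)) ?_ ?_ ?_ ?_
    · intro f hf
      simp only [mem_filter, mem_univ, true_and] at hf ⊢
      exact hflip f t' hf
    · intro f hf
      simp only [mem_filter, mem_univ, true_and] at hf ⊢
      rw [hflip f (t' + 1) hf, zmod2_add11]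
    · intro f _; exact hinv f
    · intro f _; exact hinv f
  have hsplit := Finset.card_filter_add_card_filter_not
    (s := (univ : Finset (α → ZMod 2))) (p := fun f => ∑ i, f i = t)
  have hne : (univ.filter fun f : α → ZMod 2 => ¬ ∑ i, f i = t)
      = (univ.filter fun f : α → ZMod 2 => ∑ i, f i = t + 1) := by
    apply filter_congr
    intro f _
    have h2 : ∀ u v : ZMod 2, ¬ u = v ↔ u = v + 1 := by decide
    exact h2 _ _
  rw [hne, ← hcard_eq t, card_univ, Fintype.card_fun, ZMod.card] at hsplit
  have hpos : 0 < Fintype.card α := Fintype.card_pos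
  obtain ⟨m, hm⟩ : ∃ m, Fintype.card α = m + 1 := ⟨_, (Nat.succ_pred_eq_of_pos hpos).symm⟩
  rw [hm] at hsplit ⊢
  rw [pow_succ'] at hsplit
  simp only [Nat.add_sub_cancel]
  exact Nat.eq_of_mul_eq_mul_left two_pos ((two_mul _).trans hsplit)

lemma card_fixed_outside {α : Type*} [Fintype α] [DecidableEq α]
    (K : Finset α) (hK : K.Nonempty) (d : α → ZMod 2) (t : ZMod 2) :
    (univ.filter fun a : α → ZMod 2 => (∀ i ∉ K, a i = d i) ∧ ∑ i ∈ K, a i = t).card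
      = 2 ^ (K.card - 1) := by
  classical
  have hne : Nonempty {i // i ∈ K} := ⟨⟨hK.choose, hK.choose_spec⟩⟩
  have hcc : Fintype.card {i // i ∈ K} = K.card := Fintype.card_coe K
  rw [← hcc, ← card_parity_fiber {i // i ∈ K} t]
  refine Finset.card_bij' (fun a _ => fun j : {i // i ∈ K} => a j.1)
    (fun f _ => fun i => if h : i ∈ K then f ⟨i, h⟩ else d i) ?_ ?_ ?_ ?_
  · intro a ha
    simp only [mem_filter, mem_univ, true_and] at ha ⊢
    rw [← ha.2]
    rw [Finset.univ_eq_attach]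
    exact Finset.sum_attach K a
  · intro f hf
    simp only [mem_filter, mem_univ, true_and] at hf ⊢
    constructor
    · intro i hi; exact dif_neg hi
    · rw [← hf, ← Finset.sum_attach K (fun i => if h : i ∈ K then f ⟨i, h⟩ else d i),
        Finset.univ_eq_attach]
      refine Finset.sum_congr rfl fun j _ => ?_
      show (if h : (j : α) ∈ K then f ⟨j, h⟩ else d j) = f j
      rw [dif_pos j.2]
  · intro a ha
    simp only [mem_filter, mem_univ, true_and] at ha
    funext i
    show (if h : i ∈ K then a i else d i) = a i
    by_cases hi : i ∈ K
    · exact dif_pos hi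
    · rw [dif_neg hi]; exact (ha.1 i hi).symm
  · intro f _
    ext j
    show (if h : (j : α) ∈ K then f ⟨j, h⟩ else d j) = f j
    rw [dif_pos j.2]

lemma card_interval (n k₁ k₂ : ℕ) (h0 : 0 < k₁) (h12 : k₁ < k₂) (h2n : k₂ ≤ n) :
    (univ.filter fun i : Fin n => k₁ ≤ (i : ℕ) + 1 ∧ (i : ℕ) < k₂).card = k₂ - k₁ + 1 := by
  have key : (univ.filter fun i : Fin n => k₁ ≤ (i : ℕ) + 1 ∧ (i : ℕ) < k₂).card
      = (Finset.Ico (k₁ - 1) k₂).card := by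
    refine Finset.card_bij' (fun i _ => (i : ℕ))
      (fun j hj => (⟨j, lt_of_lt_of_le (Finset.mem_Ico.mp hj).2 h2n⟩ : Fin n)) ?_ ?_ ?_ ?_
    · intro i hi
      simp only [mem_filter, mem_univ, true_and] at hi
      show (i : ℕ) ∈ Finset.Ico (k₁ - 1) k₂
      rw [Finset.mem_Ico]; omega
    · intro j hj
      rw [Finset.mem_Ico] at hj
      show (⟨j, _⟩ : Fin n) ∈ filter _ _
      simp only [mem_filter, mem_univ, true_and]
      constructor <;> omega
    · intro i _; rfl
    · intro j _; rfl
  rw [key, Nat.card_Ico]; omega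

/-- Parallel composition of two full-correlation boxes (parties are 1-based:
party p corresponds to index `i : Fin n` with `p = i + 1`).
`P₁` acts on parties 1,…,k₂ with parity `g₁`; `P₂` acts on parties k₁,…,n with
parity `∏_{i=k₁}^{k₃} x_i`.  Boxes are padded with output 0 outside their party
sets, so `c_i = a_i` for i < k₁, `c_i = a_i ⊕ b_i` for k₁ ≤ i ≤ k₂ and
`c_i = b_i` for i > k₂ is equivalent to `c = a + b`. -/
theorem parallel_composition_of_full_correlation_boxes
    (n k₁ k₂ k₃ : ℕ) (h0 : 0 < k₁) (h12 : k₁ < k₂) (h23 : k₂ < k₃) (h3n : k₃ ≤ n)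
    (g₁ : (Fin n → ZMod 2) → ZMod 2)
    (hg : ∀ x y : Fin n → ZMod 2,
      (∀ i : Fin n, (i : ℕ) < k₂ → x i = y i) → g₁ x = g₁ y)
    (c x : Fin n → ZMod 2) :
    (∑ a : Fin n → ZMod 2,
      (if (∑ i ∈ Finset.univ.filter (fun i : Fin n => (i : ℕ) < k₂), a i) = g₁ x
            ∧ (∀ i : Fin n, ¬ (i : ℕ) < k₂ → a i = 0)
        then (2:ℝ) ^ (-((k₂:ℤ) - 1)) else 0)
      *
      (if (∑ i ∈ Finset.univ.filter (fun i : Fin n => k₁ ≤ (i : ℕ) + 1), (c i + a i))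
            = (∏ i ∈ Finset.univ.filter
                (fun i : Fin n => k₁ ≤ (i : ℕ) + 1 ∧ (i : ℕ) < k₃), x i)
            ∧ (∀ i : Fin n, ¬ k₁ ≤ (i : ℕ) + 1 → c i + a i = 0)
        then (2:ℝ) ^ (-((n:ℤ) - (k₁:ℤ))) else 0))
    =
    (if (∑ i, c i)
          = g₁ x + (∏ i ∈ Finset.univ.filter
              (fun i : Fin n => k₁ ≤ (i : ℕ) + 1 ∧ (i : ℕ) < k₃), x i)
      then (2:ℝ) ^ (-((n:ℤ) - 1)) else 0) := by
  simp only [ite_mul_ite_eq]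
  rw [← Finset.sum_filter, Finset.sum_const]
  set s₁ := g₁ x with hs₁
  set s₂ := ∏ i ∈ Finset.univ.filter
      (fun i : Fin n => k₁ ≤ (i : ℕ) + 1 ∧ (i : ℕ) < k₃), x i with hs₂
  set Pf := Finset.univ.filter (fun i : Fin n => (i : ℕ) < k₂) with hPf
  set Qf := Finset.univ.filter (fun i : Fin n => k₁ ≤ (i : ℕ) + 1) with hQf
  set Qc := Finset.univ.filter (fun i : Fin n => ¬ k₁ ≤ (i : ℕ) + 1) with hQc
  set Kf := Finset.univ.filter
      (fun i : Fin n => k₁ ≤ (i : ℕ) + 1 ∧ (i : ℕ) < k₂) with hKf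
  set d : Fin n → ZMod 2 := fun i => if k₁ ≤ (i : ℕ) + 1 then 0 else c i with hd
  set t := s₁ + ∑ i ∈ Qc, c i with ht
  have hz1 : ∀ u v : ZMod 2, u + v = 0 → v = u := by decide
  have hz2 : ∀ u : ZMod 2, u + u = 0 := by decide
  -- not-in-Kf helpers
  have hPK : ∀ i : Fin n, ¬ (i : ℕ) < k₂ → i ∉ Kf := by
    intro i hp
    rw [hKf]
    simp only [Finset.mem_filter, Finset.mem_univ, true_and, not_and]
    exact fun _ => hp
  have hQK : ∀ i : Fin n, ¬ k₁ ≤ (i : ℕ) + 1 → i ∉ Kf := by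
    intro i hq
    rw [hKf]
    simp only [Finset.mem_filter, Finset.mem_univ, true_and, not_and]
    exact fun h => absurd h hq
  -- sum decompositions
  have hsumP : ∀ g : Fin n → ZMod 2,
      ∑ i ∈ Pf, g i = ∑ i ∈ Kf, g i + ∑ i ∈ Qc, g i := by
    intro g
    rw [hPf, ← Finset.sum_filter_add_sum_filter_not
      (Finset.univ.filter (fun i : Fin n => (i : ℕ) < k₂))
      (fun i => k₁ ≤ (i : ℕ) + 1) g]
    congr 1
    · rw [Finset.filter_filter]
      refine Finset.sum_congr ?_ fun _ _ => rfl
      rw [hKf]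
      ext i
      simp only [Finset.mem_filter, Finset.mem_univ, true_and]
      tauto
    · rw [Finset.filter_filter]
      refine Finset.sum_congr ?_ fun _ _ => rfl
      rw [hQc]
      ext i
      simp only [Finset.mem_filter, Finset.mem_univ, true_and]
      omega
  have hsumQ : ∀ a : Fin n → ZMod 2, (∀ i : Fin n, ¬ (i : ℕ) < k₂ → a i = 0) →
      ∑ i ∈ Qf, (c i + a i) = ∑ i ∈ Qf, c i + ∑ i ∈ Kf, a i := by
    intro a h0a
    rw [Finset.sum_add_distrib]
    congr 1
    rw [hQf, ← Finset.sum_filter_add_sum_filter_not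
      (Finset.univ.filter (fun i : Fin n => k₁ ≤ (i : ℕ) + 1))
      (fun i => (i : ℕ) < k₂) a, Finset.filter_filter, Finset.filter_filter]
    have hzero : ∑ i ∈ Finset.univ.filter
        (fun i : Fin n => k₁ ≤ (i : ℕ) + 1 ∧ ¬ (i : ℕ) < k₂), a i = 0 :=
      Finset.sum_eq_zero fun i hi => h0a i (Finset.mem_filter.mp hi).2.2
    rw [hzero, add_zero, ← hKf]
  have hQsplit : ∑ i ∈ Qf, c i + ∑ i ∈ Qc, c i = ∑ i, c i := by
    rw [hQf, hQc]
    exact Finset.sum_filter_add_sum_filter_not _ _ _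
  -- key equivalence
  have key : ∀ a : Fin n → ZMod 2,
      (((∑ i ∈ Pf, a i) = s₁ ∧ ∀ i : Fin n, ¬ (i : ℕ) < k₂ → a i = 0) ∧
       ((∑ i ∈ Qf, (c i + a i)) = s₂ ∧ ∀ i : Fin n, ¬ k₁ ≤ (i : ℕ) + 1 → c i + a i = 0))
      ↔ ((∑ i, c i) = s₁ + s₂ ∧ ((∀ i ∉ Kf, a i = d i) ∧ ∑ i ∈ Kf, a i = t)) := by
    intro a
    constructor
    · rintro ⟨⟨h1s, h1z⟩, h2s, h2z⟩
      have hout : ∀ i ∉ Kf, a i = d i := by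
        intro i hi
        rw [hKf] at hi
        simp only [Finset.mem_filter, Finset.mem_univ, true_and, not_and] at hi
        simp only [hd]
        by_cases hq : k₁ ≤ (i : ℕ) + 1
        · rw [if_pos hq]; exact h1z i (hi hq)
        · rw [if_neg hq]; exact hz1 _ _ (h2z i hq)
      have e1 : ∑ i ∈ Kf, a i + ∑ i ∈ Qc, c i = s₁ := by
        rw [← h1s, hsumP a]
        congr 1
        refine Finset.sum_congr rfl fun i hi => ?_
        rw [hQc] at hi
        simp only [Finset.mem_filter, Finset.mem_univ, true_and] at hi
        exact (hz1 _ _ (h2z i hi)).symm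
      have e2 : ∑ i ∈ Qf, c i + ∑ i ∈ Kf, a i = s₂ := by
        rw [← h2s, hsumQ a h1z]
      have hzkey : ∀ (A C' Cq S1 S2 Sc : ZMod 2),
          A + C' = S1 → Cq + A = S2 → Cq + C' = Sc → Sc = S1 + S2 ∧ A = S1 + C' := by decide
      obtain ⟨hc, hA⟩ := hzkey _ _ _ _ _ _ e1 e2 hQsplit
      exact ⟨hc, hout, by rw [ht]; exact hA⟩
    · rintro ⟨hc, hout, hKsum⟩
      have h1z : ∀ i : Fin n, ¬ (i : ℕ) < k₂ → a i = 0 := by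
        intro i hp
        have hq : k₁ ≤ (i : ℕ) + 1 := by omega
        rw [hout i (hPK i hp)]
        simp only [hd]
        rw [if_pos hq]
      have h2z : ∀ i : Fin n, ¬ k₁ ≤ (i : ℕ) + 1 → c i + a i = 0 := by
        intro i hq
        rw [hout i (hQK i hq)]
        simp only [hd]
        rw [if_neg hq]
        exact hz2 (c i)
      refine ⟨⟨?_, h1z⟩, ?_, h2z⟩
      · rw [hsumP a, hKsum]
        have haQc : ∑ i ∈ Qc, a i = ∑ i ∈ Qc, c i := by
          refine Finset.sum_congr rfl fun i hi => ?_
          rw [hQc] at hi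
          simp only [Finset.mem_filter, Finset.mem_univ, true_and] at hi
          rw [hout i (hQK i hi)]
          simp only [hd]
          rw [if_neg hi]
        rw [haQc, ht, add_assoc, hz2, add_zero]
      · rw [hsumQ a h1z, hKsum, ht]
        have hfin : ∀ (Cq C' S1 S2 Sc : ZMod 2),
            Cq + C' = Sc → Sc = S1 + S2 → Cq + (S1 + C') = S2 := by decide
        exact hfin _ _ _ _ _ hQsplit hc
  -- nonemptiness and cardinality of Kf
  have hKmem : (⟨k₁ - 1, by omega⟩ : Fin n) ∈ Kf := by
    rw [hKf]
    refine Finset.mem_filter.mpr ⟨Finset.mem_univ _, ?_⟩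
    show k₁ ≤ (k₁ - 1) + 1 ∧ (k₁ - 1) < k₂
    omega
  have hKne : Kf.Nonempty := ⟨_, hKmem⟩
  have hKcard : Kf.card = k₂ - k₁ + 1 := by
    rw [hKf]
    exact card_interval n k₁ k₂ h0 h12 (by omega)
  by_cases hc : (∑ i, c i) = s₁ + s₂
  · rw [if_pos hc]
    have hfe : (Finset.univ.filter (fun a : Fin n → ZMod 2 =>
        ((∑ i ∈ Pf, a i) = s₁ ∧ ∀ i : Fin n, ¬ (i : ℕ) < k₂ → a i = 0) ∧
        ((∑ i ∈ Qf, (c i + a i)) = s₂ ∧ ∀ i : Fin n, ¬ k₁ ≤ (i : ℕ) + 1 → c i + a i = 0)))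
        = Finset.univ.filter (fun a : Fin n → ZMod 2 =>
            (∀ i ∉ Kf, a i = d i) ∧ ∑ i ∈ Kf, a i = t) := by
      apply Finset.filter_congr
      intro a _
      rw [key a]
      simp [hc]
    rw [hfe]
    have hco : (Finset.univ.filter (fun a : Fin n → ZMod 2 =>
        (∀ i ∉ Kf, a i = d i) ∧ ∑ i ∈ Kf, a i = t)).card = 2 ^ (Kf.card - 1) := by
      convert card_fixed_outside Kf hKne d t using 3
    rw [hco, hKcard]
    simp only [Nat.add_sub_cancel]
    rw [nsmul_eq_mul]
    push_cast
    rw [← zpow_natCast (2:ℝ) (k₂ - k₁), ← zpow_add₀ (two_ne_zero),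
      ← zpow_add₀ (two_ne_zero)]
    congr 1
    push_cast [Nat.cast_sub h12.le]
    ring
  · rw [if_neg hc]
    have hfe : (Finset.univ.filter (fun a : Fin n → ZMod 2 =>
        ((∑ i ∈ Pf, a i) = s₁ ∧ ∀ i : Fin n, ¬ (i : ℕ) < k₂ → a i = 0) ∧
        ((∑ i ∈ Qf, (c i + a i)) = s₂ ∧ ∀ i : Fin n, ¬ k₁ ≤ (i : ℕ) + 1 → c i + a i = 0)))
        = ∅ :=
      Finset.filter_eq_empty_iff.mpr fun a _ hB => hc ((key a).mp hB).1
    rw [hfe, Finset.card_empty, zero_smul]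
end

section
/- For any ε ∈ (0,1) and any δ > 0, there exists m such that the m-th iterate of T₃(ε) = (ε/4)·(5 − ε) starting from ε exceeds 1 − δ. -/
theorem tripartite_bs_distills_arbitrarily_close (ε : ℝ) (h0 : 0 < ε) (h1 : ε < 1)
    (δ : ℝ) (hδ : 0 < δ) :
    ∃ m : ℕ, (fun e : ℝ => e / 4 * (5 - e))^[m] ε > 1 - δ := by
  set f : ℝ → ℝ := fun e => e / 4 * (5 - e) with hf
  set r : ℝ := (4 - ε) / 4 with hr
  have hr0 : 0 ≤ r := by rw [hr]; linarith
  have hr1 : r < 1 := by rw [hr]; linarith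
  have key : ∀ m : ℕ, ε ≤ f^[m] ε ∧ f^[m] ε < 1 ∧ 1 - f^[m] ε ≤ r ^ m * (1 - ε) := by
    intro m
    induction m with
    | zero => refine ⟨le_refl _, by simpa using h1, by simp⟩
    | succ n ih =>
      obtain ⟨ha, hb, hc⟩ := ih
      set x := f^[n] ε with hx
      have hfx : f^[n + 1] ε = f x := by rw [Function.iterate_succ_apply']
      have hfeq : f x = x / 4 * (5 - x) := rfl
      refine ⟨?_, ?_, ?_⟩
      · rw [hfx, hfeq]; nlinarith
      · rw [hfx, hfeq]; nlinarith
      · rw [hfx, hfeq]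
        have h1fx : 1 - x / 4 * (5 - x) = (1 - x) * ((4 - x) / 4) := by ring
        rw [h1fx, pow_succ]
        have hxr : (4 - x) / 4 ≤ r := by rw [hr]; linarith
        have : (1 - x) * ((4 - x) / 4) ≤ (r ^ n * (1 - ε)) * r := by
          apply mul_le_mul hc hxr (by linarith) (mul_nonneg (pow_nonneg hr0 n) (by linarith))
        linarith [this]
  obtain ⟨m, hm⟩ := exists_pow_lt_of_lt_one (div_pos hδ (by linarith) : (0:ℝ) < δ / (1 - ε)) hr1
  refine ⟨m, ?_⟩
  obtain ⟨ha, hb, hc⟩ := key m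
  have : r ^ m * (1 - ε) < δ := by
    have h1e : 0 < 1 - ε := by linarith
    calc r ^ m * (1 - ε) < δ / (1 - ε) * (1 - ε) := by
          exact mul_lt_mul_of_pos_right hm h1e
      _ = δ := by field_simp
  linarith
end
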